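/- For the tensor product of complex Hadamard matrices: if H ∈ M_n(ℂ) and K ∈ M_m(ℂ) are complex Hadamard matrices and L ∈ M_{m×n}(ℂ) has all entries of modulus 1, then the Diță deformation H ⊗_L K, with entries (H ⊗_L K)_{(i,a),(j,b)} = H_{ij} L_{aj} K_{ab}, is a complex Hadamard matrix of size nm. -/

import Mathlib

open Complex BigOperators

/-- Diță deformation: if `H ∈ M_n(ℂ)` and `K ∈ M_m(ℂ)` are complex Hadamard
matrices and `L ∈ M_{m×n}(𝕋)` has all entries of modulus 1, then `H ⊗_L K`, with
entries `(H ⊗_L K)_{(i,a),(j,b)} = H_{ij} L_{aj} K_{ab}`, is a complex Hadamard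
matrix of size `nm`. -/
theorem dita_deformation_hadamard {n m : ℕ}
    (H : Matrix (Fin n) (Fin n) ℂ) (K : Matrix (Fin m) (Fin m) ℂ)
    (L : Matrix (Fin m) (Fin n) ℂ)
    (hHmod : ∀ i j, ‖H i j‖ = 1)
    (hHrows : ∀ i j, i ≠ j → ∑ k, H i k * (starRingEnd ℂ) (H j k) = 0)
    (hKmod : ∀ a b, ‖K a b‖ = 1)
    (hKrows : ∀ a b, a ≠ b → ∑ c, K a c * (starRingEnd ℂ) (K b c) = 0)
    (hLmod : ∀ a j, ‖L a j‖ = 1)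
    (D : Matrix (Fin n × Fin m) (Fin n × Fin m) ℂ)
    (hD : ∀ i a j b, D (i, a) (j, b) = H i j * L a j * K a b) :
    (∀ p q, ‖D p q‖ = 1) ∧
    (∀ p q, p ≠ q → ∑ r, D p r * (starRingEnd ℂ) (D q r) = 0) := by
  constructor
  · rintro ⟨i, a⟩ ⟨j, b⟩
    rw [hD]
    simp [map_mul, hHmod, hKmod, hLmod]
  · rintro ⟨i, a⟩ ⟨j, b⟩ hne
    have key : ∀ r : Fin n × Fin m,
        D (i, a) r * (starRingEnd ℂ) (D (j, b) r)
          = (H i r.1 * (starRingEnd ℂ) (H j r.1) * (L a r.1 * (starRingEnd ℂ) (L b r.1)))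
            * (K a r.2 * (starRingEnd ℂ) (K b r.2)) := by
      rintro ⟨c, d⟩
      rw [hD, hD]
      simp [map_mul]
      ring
    rw [Fintype.sum_prod_type]
    simp only [key]
    by_cases hab : a = b
    · subst hab
      have hi : i ≠ j := by rintro rfl; exact hne rfl
      have hL : ∀ c, L a c * (starRingEnd ℂ) (L a c) = 1 := by
        intro c
        rw [Complex.mul_conj]
        norm_cast
        rw [← Complex.sq_norm, hLmod]
        norm_num
      calc ∑ c, ∑ d, (H i c * (starRingEnd ℂ) (H j c) * (L a c * (starRingEnd ℂ) (L a c)))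
            * (K a d * (starRingEnd ℂ) (K a d))
          = (∑ c, H i c * (starRingEnd ℂ) (H j c)) * ∑ d, K a d * (starRingEnd ℂ) (K a d) := by
            rw [Finset.sum_mul_sum]
            exact Finset.sum_congr rfl fun c _ => Finset.sum_congr rfl fun d _ => by
              rw [hL]; ring
        _ = 0 := by rw [hHrows i j hi, zero_mul]
    · have : ∀ c : Fin n, ∑ d, (H i c * (starRingEnd ℂ) (H j c) * (L a c * (starRingEnd ℂ) (L b c)))
            * (K a d * (starRingEnd ℂ) (K b d)) = 0 := by
        intro c
        rw [← Finset.mul_sum, hKrows a b hab, mul_zero]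
      simp [this]
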